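/- In the symmetric coercive setting (a symmetric, coercive with constant α, bounded with norm ‖a‖; b with inf-sup constant β; α₀ coercivity constant of a on K), the solution (u,p) of the mixed problem satisfies ‖u‖_V ≤ (1/α₀)‖f‖_{K'} + (1/β)(‖a‖/α)^{1/2}‖g‖_{Q'}. -/

import Mathlib

open Set

/-- Dual (semi) norm of a functional `f : V → ℝ`, tested only on the subset `U`. -/
noncomputable def dualSemiNorm {V : Type*} [NormedAddCommGroup V] (U : Set V) (f : V → ℝ) : ℝ :=
  sSup ((fun v => |f v| / ‖v‖) '' (U \ {0}))

/-- Lax–Milgram existence: a coercive bounded bilinear form represents every functional. -/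
lemma laxMilgram_exists {S : Type*} [NormedAddCommGroup S] [InnerProductSpace ℝ S]
    [CompleteSpace S] {B : S →L[ℝ] S →L[ℝ] ℝ} (h : IsCoercive B) (ℓ : S →L[ℝ] ℝ) :
    ∃ k : S, ∀ v : S, B k v = ℓ v := by
  obtain ⟨w, hw⟩ := (InnerProductSpace.toDual ℝ S).surjective ℓ
  refine ⟨h.continuousLinearEquivOfBilin.symm w, fun v => ?_⟩
  have h1 := h.continuousLinearEquivOfBilin_apply (h.continuousLinearEquivOfBilin.symm w) v
  rw [h.continuousLinearEquivOfBilin.apply_symm_apply] at h1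
  rw [← h1, ← hw, InnerProductSpace.toDual_apply_apply]

set_option maxHeartbeats 1000000 in
/-- Refined stability estimate for `u` in the symmetric coercive case:
`‖u‖ ≤ (1/α₀)‖f‖_{K'} + (1/β)(‖a‖/α)^{1/2}‖g‖_{Q'}`. -/
theorem stmt6
    {V Q : Type*} [NormedAddCommGroup V] [InnerProductSpace ℝ V] [CompleteSpace V]
    [NormedAddCommGroup Q] [InnerProductSpace ℝ Q] [CompleteSpace Q]
    (a : V →L[ℝ] V →L[ℝ] ℝ) (b : V →L[ℝ] Q →L[ℝ] ℝ)
    (hsym : ∀ v w : V, a v w = a w v)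
    (α : ℝ) (hα : 0 < α) (hcoer : ∀ v : V, a v v ≥ α * ‖v‖ ^ 2)
    (K : Set V) (hK : K = {v : V | ∀ q : Q, b v q = 0})
    (α₀ : ℝ) (hα₀ : α₀ ≥ α) (hcoerK : ∀ v ∈ K, a v v ≥ α₀ * ‖v‖ ^ 2)
    (β : ℝ) (hβ : 0 < β)
    (hBsurj : ∀ h : Q →L[ℝ] ℝ, ∃ v : V, b v = h ∧ ‖v‖ ≤ (1 / β) * ‖h‖)
    (f : V →L[ℝ] ℝ) (g : Q →L[ℝ] ℝ) (u : V) (p : Q)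
    (hsol1 : ∀ v : V, a u v + b v p = f v) (hsol2 : ∀ q : Q, b u q = g q) :
    ‖u‖ ≤ (1 / α₀) * dualSemiNorm K (fun v => f v)
      + (1 / β) * Real.sqrt (‖a‖ / α) * ‖g‖ := by
  have hα₀pos : 0 < α₀ := lt_of_lt_of_le hα hα₀
  -- the kernel as a submodule
  set S : Submodule ℝ V := LinearMap.ker (b : V →ₗ[ℝ] Q →L[ℝ] ℝ) with hS
  have hmemS : ∀ v : V, v ∈ S ↔ v ∈ K := by
    intro v
    rw [hK]
    constructor
    · intro hv q
      have : b v = 0 := hv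
      simp [this]
    · intro hv
      have : b v = 0 := ContinuousLinearMap.ext hv
      exact this
  haveI : CompleteSpace S := (ContinuousLinearMap.isClosed_ker b).completeSpace_coe
  -- restriction of `a` to `S`
  set aS : S →L[ℝ] S →L[ℝ] ℝ :=
    (((a.comp S.subtypeL).flip.comp S.subtypeL).flip) with haS
  have haS_apply : ∀ x y : S, aS x y = a (x : V) (y : V) := by
    intro x y; simp [haS]
  have hcoerS : IsCoercive aS := by
    refine ⟨α, hα, fun v => ?_⟩
    have := hcoer (v : V)
    have hnv : α * ‖v‖ * ‖v‖ = α * ‖(v : V)‖ ^ 2 := by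
      have : ‖v‖ = ‖(v : V)‖ := rfl
      rw [this]; ring
    rw [haS_apply, hnv]
    exact hcoer (v : V)
  -- lift of g
  obtain ⟨ug, hbug, hnug⟩ := hBsurj g
  -- a-orthogonal projection of ug onto S, via Lax-Milgram
  obtain ⟨k, hk⟩ := laxMilgram_exists hcoerS ((a ug).comp S.subtypeL)
  -- the corrected lift and the kernel part
  set e : V := ug - (k : V) with he
  set u₀ : V := u - e with hu₀
  have horth : ∀ v ∈ S, a e v = 0 := by
    intro v hv
    have h1 := hk ⟨v, hv⟩
    rw [haS_apply] at h1
    simp only [he, map_sub, ContinuousLinearMap.sub_apply]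
    simp only [ContinuousLinearMap.comp_apply, Submodule.subtypeL_apply] at h1
    rw [h1]
    ring
  have hbk : b (k : V) = 0 := k.2
  have hbe : b e = g := by
    rw [he, map_sub, hbk, hbug, sub_zero]
  have hu₀S : u₀ ∈ S := by
    show b u₀ = 0
    rw [hu₀, map_sub, hbe]
    ext q
    simp [hsol2 q]
  have hu₀K : u₀ ∈ K := (hmemS u₀).mp hu₀S
  -- bound on e
  have hkS : (k : V) ∈ S := k.2
  have hEnergy : a e e ≤ a ug ug := by
    have h1 : a e (k : V) = 0 := horth _ hkS
    have h2 : a (k : V) e = 0 := by rw [hsym]; exact h1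
    have h3 : ug = e + (k : V) := by rw [he]; abel
    have h4 : a ug ug = a e e + a e (k:V) + a (k:V) e + a (k:V) (k:V) := by
      rw [h3, map_add, map_add a e ((k:V)), ContinuousLinearMap.add_apply, ContinuousLinearMap.add_apply]; ring
    have h5 : (0:ℝ) ≤ a (k:V) (k:V) := le_trans (by positivity) (hcoer (k:V))
    rw [h4, h1, h2]; linarith
  have haug : a ug ug ≤ ‖a‖ * ‖ug‖ * ‖ug‖ :=
    le_trans (le_abs_self _) (by simpa using a.le_opNorm₂ ug ug)
  have hanorm_nonneg : (0:ℝ) ≤ ‖a‖ / α := by positivity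
  have hebound : ‖e‖ ≤ Real.sqrt (‖a‖ / α) * ‖ug‖ := by
    have h1 : α * ‖e‖ ^ 2 ≤ a e e := hcoer e
    have h2 : ‖e‖ ^ 2 ≤ (‖a‖ / α) * ‖ug‖ ^ 2 := by
      rw [div_mul_eq_mul_div, le_div_iff₀ hα]
      nlinarith
    calc ‖e‖ = Real.sqrt (‖e‖ ^ 2) := (Real.sqrt_sq (norm_nonneg e)).symm
      _ ≤ Real.sqrt ((‖a‖ / α) * ‖ug‖ ^ 2) := Real.sqrt_le_sqrt h2
      _ = Real.sqrt (‖a‖ / α) * ‖ug‖ := by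
          rw [Real.sqrt_mul hanorm_nonneg, Real.sqrt_sq (norm_nonneg ug)]
  -- bound on u₀
  set dsn : ℝ := dualSemiNorm K (fun v => f v) with hdsn
  have hbdd : BddAbove ((fun v => |f v| / ‖v‖) '' (K \ {0})) := by
    refine ⟨‖f‖, fun x hx => ?_⟩
    obtain ⟨v, hv, rfl⟩ := hx
    have hv0 : v ≠ 0 := hv.2
    have : (0:ℝ) < ‖v‖ := norm_pos_iff.mpr hv0
    rw [div_le_iff₀ this]
    exact f.le_opNorm v
  have hdsn0 : 0 ≤ dsn := by
    rcases eq_empty_or_nonempty (K \ {0}) with hemp | ⟨v, hv⟩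
    · simp [hdsn, dualSemiNorm, hemp, Real.sSup_empty]
    · have hmem : |f v| / ‖v‖ ∈ (fun v => |f v| / ‖v‖) '' (K \ {0}) := ⟨v, hv, rfl⟩
      have := le_csSup hbdd hmem
      have hpos : 0 ≤ |f v| / ‖v‖ := by positivity
      exact le_trans hpos this
  have hfu₀ : f u₀ ≤ dsn * ‖u₀‖ := by
    rcases eq_or_ne u₀ 0 with h0 | h0
    · simp [h0]
    · have hmem : |f u₀| / ‖u₀‖ ∈ (fun v => |f v| / ‖v‖) '' (K \ {0}) :=
        ⟨u₀, ⟨hu₀K, h0⟩, rfl⟩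
      have hle : |f u₀| / ‖u₀‖ ≤ dsn := le_csSup hbdd hmem
      have hn : (0:ℝ) < ‖u₀‖ := norm_pos_iff.mpr h0
      have := (div_le_iff₀ hn).mp hle
      exact le_trans (le_abs_self _) this
  have hau₀ : a u₀ u₀ = f u₀ := by
    have h1 := hsol1 u₀
    have hbu₀p : b u₀ p = 0 := by rw [show b u₀ = 0 from hu₀S]; simp
    have h2 : u = u₀ + e := by rw [hu₀]; abel
    have h3 : a u u₀ = a u₀ u₀ + a e u₀ := by
      rw [h2, map_add, ContinuousLinearMap.add_apply]
    have h4 : a e u₀ = 0 := horth _ hu₀S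
    rw [h3, h4, hbu₀p] at h1
    linarith
  have hu₀bound : ‖u₀‖ ≤ dsn / α₀ := by
    have h1 : α₀ * ‖u₀‖ ^ 2 ≤ a u₀ u₀ := hcoerK u₀ hu₀K
    rw [hau₀] at h1
    rcases eq_or_ne u₀ 0 with h0 | h0
    · rw [h0, norm_zero]; positivity
    · have hn : (0:ℝ) < ‖u₀‖ := norm_pos_iff.mpr h0
      rw [le_div_iff₀ hα₀pos]
      have := le_trans h1 hfu₀
      nlinarith
  -- conclusion
  have hsplit : u = u₀ + e := by rw [hu₀]; abel
  calc ‖u‖ ≤ ‖u₀‖ + ‖e‖ := by rw [hsplit]; exact norm_add_le _ _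
    _ ≤ dsn / α₀ + Real.sqrt (‖a‖ / α) * ((1 / β) * ‖g‖) := by
        refine add_le_add hu₀bound (le_trans hebound ?_)
        exact mul_le_mul_of_nonneg_left hnug (Real.sqrt_nonneg _)
    _ = (1 / α₀) * dsn + (1 / β) * Real.sqrt (‖a‖ / α) * ‖g‖ := by ring
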